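/- Let g̃(u) = max_{i ∈ {1,...,K}} u_i on ℝ^K and ζ > 0. If s ∈ ℝ satisfies Σ_{i=1}^K max(u_i - s, 0) = ζ, then the vector with components min(u_i, s) is the proximity operator prox_{ζ g̃}(u). -/
import Mathlib


/-- The set of minimizers defining the proximity operator of `p` at `u`. -/
def proxSet {n : ℕ} (p : (Fin n → ℝ) → ℝ) (u : Fin n → ℝ) : Set (Fin n → ℝ) :=
  {x | ∀ y, p x + (1/2) * ∑ i, (u i - x i)^2 ≤ p y + (1/2) * ∑ i, (u i - y i)^2}

theorem prox_of_max_function (K : ℕ) [NeZero K] (ζ : ℝ) (hζ : 0 < ζ)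
    (u : Fin K → ℝ) (s : ℝ) (hs : ∑ i, max (u i - s) 0 = ζ) :
    proxSet (fun x => ζ * ⨆ i, x i) u = {fun i => min (u i) s} := by
  set v : Fin K → ℝ := fun i => min (u i) s with hv
  set w : Fin K → ℝ := fun i => max (u i - s) 0 with hw
  have hwnn : ∀ i, 0 ≤ w i := fun i => le_max_right _ _
  have hwv : ∀ i, w i = u i - v i := by
    intro i
    rcases le_total (u i) s with h | h
    · simp [hw, hv, min_eq_left h, max_eq_right (sub_nonpos.2 h)]
    · simp [hw, hv, min_eq_right h, max_eq_left (sub_nonneg.2 h)]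
  have hex : ∃ i, s ≤ u i := by
    by_contra h
    push_neg at h
    have h0 : ∑ i, w i = 0 := Finset.sum_eq_zero fun i _ => by
      simp [hw, max_eq_right (sub_nonpos.2 (h i).le)]
    rw [hs] at h0
    linarith
  obtain ⟨i0, hi0⟩ := hex
  have hvsup : (⨆ i, v i) = s := by
    apply le_antisymm
    · exact ciSup_le fun i => min_le_right _ _
    · have h1 : v i0 = s := min_eq_right hi0
      calc s = v i0 := h1.symm
        _ ≤ ⨆ i, v i := le_ciSup (Set.Finite.bddAbove (Set.finite_range v)) i0
  have key : ∀ y : Fin K → ℝ,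
      ζ * s + (1/2) * ∑ i, (u i - v i)^2 + (1/2) * ∑ i, (y i - v i)^2
        ≤ ζ * (⨆ i, y i) + (1/2) * ∑ i, (u i - y i)^2 := by
    intro y
    set M := ⨆ i, y i with hM
    have hyM : ∀ i, y i ≤ M :=
      fun i => le_ciSup (Set.Finite.bddAbove (Set.finite_range y)) i
    have point : ∀ i ∈ Finset.univ,
        (u i - v i)^2 + (y i - v i)^2 - 2*(M - s)*(w i) ≤ (u i - y i)^2 := by
      intro i _
      have h1 : (y i - v i) * w i ≤ (M - s) * w i := by
        rcases le_or_gt (u i) s with h | h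
        · have hwi : w i = 0 := by simp [hw, max_eq_right (sub_nonpos.2 h)]
          simp [hwi]
        · have hvi : v i = s := min_eq_right h.le
          have h2 : y i - v i ≤ M - s := by rw [hvi]; exact sub_le_sub_right (hyM i) s
          exact mul_le_mul_of_nonneg_right h2 (hwnn i)
      have h2 : (u i - y i)^2 = (u i - v i)^2 + (y i - v i)^2 - 2*((y i - v i) * (w i)) := by
        rw [hwv i]; ring
      nlinarith [h1, h2]
    have hsum := Finset.sum_le_sum point
    rw [Finset.sum_sub_distrib, Finset.sum_add_distrib, ← Finset.mul_sum, hs] at hsum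
    linarith
  ext x
  simp only [proxSet, Set.mem_setOf_eq, Set.mem_singleton_iff]
  constructor
  · intro hx
    have h1 := hx v
    have h2 := key x
    have hnn : ∀ j ∈ Finset.univ, (0:ℝ) ≤ (x j - v j)^2 := fun j _ => sq_nonneg _
    have h3 : ∑ i, (x i - v i)^2 ≤ 0 := by
      rw [hvsup] at h1
      linarith
    have h4 : ∑ i, (x i - v i)^2 = 0 :=
      le_antisymm h3 (Finset.sum_nonneg hnn)
    funext i
    have h5 := (Finset.sum_eq_zero_iff_of_nonneg hnn).1 h4 i (Finset.mem_univ i)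
    have h6 : x i - v i = 0 := by
      have := sq_eq_zero_iff.1 h5
      exact this
    have : x i = v i := by linarith
    simpa [hv] using this
  · intro hx
    subst hx
    intro y
    have h1 := key y
    have h2 : 0 ≤ ∑ i, (y i - v i)^2 := Finset.sum_nonneg fun j _ => sq_nonneg _
    rw [show (fun i => min (u i) s) = v from rfl, hvsup]
    linarith
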